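/- Define f(n,k) = Σ_{j∈ℤ} (−1)^j q^{j(3j−1)/2} [n choose k−j]_q [n choose k+j]_q. Then for all n ≥ 1 and all k, f(n,k) = q^k f(n−1,k) + f(n−1,k−1). -/

import Mathlib

open LaurentPolynomial

/-- The Gaussian (q-)binomial coefficient `[n choose k]_q`, as a Laurent polynomial in `q`,
with the convention that it vanishes for `k < 0` or `k > n`.  Defined via the standard
Pascal-type recurrence `[n+1, k] = q^k [n, k] + [n, k-1]`. -/
noncomputable def qb : ℕ → ℤ → LaurentPolynomial ℤ
  | 0, k => if k = 0 then 1 else 0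
  | (n+1), k => T k * qb n k + qb n (k-1)

/-- The variable `q`. -/
noncomputable def q : LaurentPolynomial ℤ := T 1

/-- `f n k = Σ_{j∈ℤ} (−1)^j q^{j(3j−1)/2} [n choose k−j]_q [n choose k+j]_q`. -/
noncomputable def f (n : ℕ) (k : ℤ) : LaurentPolynomial ℤ :=
  ∑ᶠ j : ℤ, (-1 : LaurentPolynomial ℤ) ^ j.natAbs * T (j * (3 * j - 1) / 2) *
    qb n (k - j) * qb n (k + j)

abbrev L := LaurentPolynomial ℤ


lemma qb_succ (n : ℕ) (a : ℤ) : qb (n+1) a = T a * qb n a + qb n (a-1) := by rw [qb]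

lemma qb_neg : ∀ (n : ℕ) {a : ℤ}, a < 0 → qb n a = 0 := by
  intro n
  induction n with
  | zero => intro a ha; rw [qb]; simp; omega
  | succ n ih => intro a ha; rw [qb_succ, ih ha, ih (by omega)]; ring

lemma qb_gt : ∀ (n : ℕ) {a : ℤ}, (n : ℤ) < a → qb n a = 0 := by
  intro n
  induction n with
  | zero => intro a ha; rw [qb]; simp; omega
  | succ n ih =>
    intro a ha
    rw [qb_succ, ih (by push_cast at ha ⊢; omega), ih (by push_cast at ha ⊢; omega)]
    ring

lemma key (m : ℕ) : ∀ (a : ℤ), (T a - 1) * qb m a = (T ((m : ℤ) + 1 - a) - 1) * qb m (a - 1) := by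
  induction m with
  | zero =>
    intro a
    rcases eq_or_ne a 0 with rfl | h0
    · rw [qb]; simp [qb, qb_neg]
    rcases eq_or_ne a 1 with rfl | h1
    · norm_num [qb, T_zero]
    · rw [qb, qb]; simp [h0, show a - 1 ≠ 0 by omega]
  | succ m ih =>
    intro a
    rw [qb_succ, qb_succ]
    have h1 := ih a
    have h2 := ih (a - 1)
    have g2 : (T (a - 1) : L) = T a * T (-1) := by
      rw [show a - 1 = a + -1 from by ring, T_add]
    have g4 : (T ((m:ℤ) + 1 - a) : L) = T ((m:ℤ)+1) * T (-a) := by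
      rw [show (m:ℤ) + 1 - a = ((m:ℤ)+1) + -a from by ring, T_add]
    have g5 : (T ((m:ℤ) + 1 - (a - 1)) : L) = T ((m:ℤ)+1) * (T 1 * T (-a)) := by
      rw [show (m:ℤ) + 1 - (a-1) = ((m:ℤ)+1) + (1 + -a) from by ring, T_add ((m:ℤ)+1) (1 + -a), T_add 1 (-a)]
    have g1 : (T ((↑(m+1):ℤ) + 1 - a) : L) = T ((m:ℤ)+1) * (T 1 * T (-a)) := by
      rw [show ((↑(m+1):ℤ)) + 1 - a = ((m:ℤ)+1) + (1 + -a) from by push_cast; ring, T_add ((m:ℤ)+1) (1 + -a), T_add 1 (-a)]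
    have ht : (T (1 : ℤ) : L) * T (-1 : ℤ) = 1 := by rw [← T_add]; simp
    have e4 : a - 1 - 1 = a - 2 := by ring
    rw [g4] at h1
    rw [g5, g2, show a - 1 - 1 = a - 2 from e4] at h2
    rw [g1, g2, e4]
    linear_combination T a * h1 + h2 - (qb m (a-1) * T a * T ((m:ℤ)+1) * T (-a)) * ht

noncomputable def sg (j : ℤ) : L := (-1) ^ j.natAbs

lemma sg_neg (j : ℤ) : sg (-j) = sg j := by simp [sg]

lemma sg_oneSub (j : ℤ) : sg (1 - j) = -sg j := by
  unfold sg
  rcases Int.even_or_odd j with h | h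
  · have h1 : Odd (1 - j) := by
      rcases h with ⟨c, hc⟩; exact ⟨-c, by omega⟩
    rw [(Int.natAbs_odd.mpr h1).neg_one_pow, (Int.natAbs_even.mpr h).neg_one_pow]
  · have h1 : Even (1 - j) := by
      rcases h with ⟨c, hc⟩; exact ⟨-c, by omega⟩
    rw [(Int.natAbs_even.mpr h1).neg_one_pow, (Int.natAbs_odd.mpr h).neg_one_pow, neg_neg]

lemma twoE (j : ℤ) : 2 * (j * (3 * j - 1) / 2) = j * (3 * j - 1) := by
  apply Int.mul_ediv_cancel'
  rcases Int.even_or_odd j with ⟨c, hc⟩ | ⟨c, hc⟩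
  · exact ⟨c * (3 * j - 1), by rw [hc]; ring⟩
  · exact ⟨j * (3 * c + 1), by rw [hc]; ring⟩

lemma Ee_neg (j : ℤ) : (-j) * (3 * (-j) - 1) / 2 = j * (3 * j - 1) / 2 + j := by
  have h1 := twoE j
  have h3 : (-j) * (3 * (-j) - 1) = j * (3 * j - 1) + 2 * j := by ring
  rw [h3]
  generalize j * (3 * j - 1) = X at h1 ⊢
  omega

lemma Ee_oneSub (j : ℤ) : (1 - j) * (3 * (1 - j) - 1) / 2 = j * (3 * j - 1) / 2 - 2 * j + 1 := by
  have h1 := twoE j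
  have h3 : (1 - j) * (3 * (1 - j) - 1) = j * (3 * j - 1) - 4 * j + 2 := by ring
  rw [h3]
  generalize j * (3 * j - 1) = X at h1 ⊢
  omega
def Ee (j : ℤ) : ℤ := j * (3 * j - 1) / 2

lemma EeN (j : ℤ) : Ee (-j) = Ee j + j := Ee_neg j
lemma Ee1 (j : ℤ) : Ee (1 - j) = Ee j - 2 * j + 1 := Ee_oneSub j

lemma supp1 (m : ℕ) (a : ℤ) (c G : ℤ → L) :
    (Function.support fun j => c j * (qb m (a - j) * G j)).Finite := by
  apply (Set.finite_Icc (a - m) a).subset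
  intro j hj
  rw [Function.mem_support] at hj
  rw [Set.mem_Icc]
  by_contra hc
  apply hj
  have : a - j < 0 ∨ (m : ℤ) < a - j := by omega
  rcases this with h | h
  · rw [qb_neg m h]; ring
  · rw [qb_gt m h]; ring

lemma supp2 (m : ℕ) (a : ℤ) (c G : ℤ → L) :
    (Function.support fun j => c j * (qb m (a - j - 1) * G j)).Finite := by
  apply (Set.finite_Icc (a - m - 1) (a - 1)).subset
  intro j hj
  rw [Function.mem_support] at hj
  rw [Set.mem_Icc]
  by_contra hc
  apply hj
  have : a - j - 1 < 0 ∨ (m : ℤ) < a - j - 1 := by omega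
  rcases this with h | h
  · rw [qb_neg m h]; ring
  · rw [qb_gt m h]; ring

lemma fsupp_add {f g : ℤ → L} (hf : (Function.support f).Finite)
    (hg : (Function.support g).Finite) :
    (Function.support fun j => f j + g j).Finite :=
  (hf.union hg).subset (Function.support_add f g)

lemma T_mul_finsum (c : ℤ) (e : ℤ → ℤ) (P : ℤ → L)
    (h : (Function.support fun j => sg j * T (e j) * P j).Finite) :
    T c * ∑ᶠ j : ℤ, sg j * T (e j) * P j = ∑ᶠ j : ℤ, sg j * T (e j + c) * P j := by
  rw [mul_finsum _ _]
  exact finsum_congr fun j => by rw [T_add]; ring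
lemma twoL_ne_zero : (2 : L) ≠ 0 := by
  have h : Polynomial.toLaurent (2 : Polynomial ℤ) = (2 : L) := by rw [map_ofNat]
  rw [← h]
  exact Polynomial.toLaurent_ne_zero.mpr (by norm_num)

lemma halve (S : L) (h : S + S = 0) : S = 0 := by
  have h2 : (2 : L) * S = 0 := by linear_combination h
  rcases mul_eq_zero.mp h2 with h | h
  · exact absurd h twoL_ne_zero
  · exact h

lemma refl0 (m : ℕ) (k c : ℤ) :
    ∑ᶠ j : ℤ, sg j * T (Ee j - j + c) * (qb m (k - j) * qb m (k + j - 1)) = 0 := by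
  set F : ℤ → L := fun j => sg j * T (Ee j - j + c) * (qb m (k - j) * qb m (k + j - 1)) with hF
  have hrev : ∀ j : ℤ, F (1 - j) = -F j := by
    intro j
    simp only [hF]
    have e1 : Ee (1 - j) - (1 - j) + c = Ee j - j + c := by rw [Ee1]; ring
    have e2 : k - (1 - j) = k + j - 1 := by ring
    have e3 : k + (1 - j) - 1 = k - j := by ring
    rw [sg_oneSub, e1, e2, e3]
    ring
  have h1 : ∑ᶠ j : ℤ, F ((Equiv.subLeft (1 : ℤ)) j) = ∑ᶠ j, F j := finsum_comp_equiv _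
  have h2 : ∑ᶠ j : ℤ, F ((Equiv.subLeft (1 : ℤ)) j) = -∑ᶠ j, F j := by
    rw [← finsum_neg_distrib]
    exact finsum_congr fun j => by rw [Equiv.subLeft_apply, hrev]
  rw [h1] at h2
  apply halve
  nth_rewrite 1 [h2]
  ring

lemma Yswap (m : ℕ) (k c : ℤ) :
    ∑ᶠ j : ℤ, sg j * T (Ee j + j + c) * (qb m (k - j) * qb m (k + j)) =
      ∑ᶠ j : ℤ, sg j * T (Ee j + c) * (qb m (k - j) * qb m (k + j)) := by
  set G : ℤ → L := fun j => sg j * T (Ee j + c) * (qb m (k - j) * qb m (k + j)) with hG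
  have hpt : ∀ j : ℤ, G (-j) = sg j * T (Ee j + j + c) * (qb m (k - j) * qb m (k + j)) := by
    intro j
    simp only [hG]
    have e1 : Ee (-j) + c = Ee j + j + c := by rw [EeN]
    have e2 : k - -j = k + j := by ring
    have e3 : k + -j = k - j := by ring
    rw [sg_neg, e1, e2, e3]
    ring
  calc ∑ᶠ j : ℤ, sg j * T (Ee j + j + c) * (qb m (k - j) * qb m (k + j))
      = ∑ᶠ j : ℤ, G ((Equiv.neg ℤ) j) := by
        exact (finsum_congr fun j => by rw [Equiv.neg_apply, hpt]).symm
    _ = ∑ᶠ j, G j := finsum_comp_equiv _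

lemma P3swap (m : ℕ) (k c : ℤ) :
    ∑ᶠ j : ℤ, sg j * T (Ee j + j + c) * (qb m (k - j - 1) * qb m (k + j)) =
      ∑ᶠ j : ℤ, sg j * T (Ee j + c) * (qb m (k - j) * qb m (k + j - 1)) := by
  set G : ℤ → L := fun j => sg j * T (Ee j + c) * (qb m (k - j) * qb m (k + j - 1)) with hG
  have hpt : ∀ j : ℤ, G (-j) = sg j * T (Ee j + j + c) * (qb m (k - j - 1) * qb m (k + j)) := by
    intro j
    simp only [hG]
    have e1 : Ee (-j) + c = Ee j + j + c := by rw [EeN]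
    have e2 : k - -j = k + j := by ring
    have e3 : k + -j - 1 = k - j - 1 := by ring
    rw [sg_neg, e1, e2, e3]
    ring
  calc ∑ᶠ j : ℤ, sg j * T (Ee j + j + c) * (qb m (k - j - 1) * qb m (k + j))
      = ∑ᶠ j : ℤ, G ((Equiv.neg ℤ) j) := by
        exact (finsum_congr fun j => by rw [Equiv.neg_apply, hpt]).symm
    _ = ∑ᶠ j, G j := finsum_comp_equiv _
lemma core (m : ℕ) (k : ℤ) :
    ∑ᶠ j : ℤ, sg j * T (Ee j + j + k) * (qb m (k - j) * qb m (k + j)) =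
      (∑ᶠ j : ℤ, sg j * T (Ee j) * (qb m (k - j) * qb m (k + j))) -
        ∑ᶠ j : ℤ, sg j * T (Ee j) * (qb m (k - j) * qb m (k + j - 1)) := by
  have pt : ∀ j : ℤ,
      sg j * T (Ee j + j + k) * (qb m (k - j) * qb m (k + j)) =
        sg j * T (Ee j) * (qb m (k - j) * qb m (k + j)) +
          (sg j * T (Ee j - j + ((m : ℤ) + 1 - k)) * (qb m (k - j) * qb m (k + j - 1)) -
            sg j * T (Ee j) * (qb m (k - j) * qb m (k + j - 1))) := by
    intro j
    have hk := key m (k + j)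
    have g1 : (T (Ee j + j + k) : L) = T (Ee j) * T (k + j) := by
      rw [← T_add]; congr 1; ring
    have g2 : (T (Ee j - j + ((m : ℤ) + 1 - k)) : L) = T (Ee j) * T ((m : ℤ) + 1 - (k + j)) := by
      rw [← T_add]; congr 1; ring
    rw [g1, g2]
    linear_combination (sg j * T (Ee j) * qb m (k - j)) * hk
  rw [finsum_congr pt, finsum_add_distrib (supp1 m k _ _)
    ((supp1 m k _ _).union (supp1 m k _ _) |>.subset (Function.support_sub _ _)),
    finsum_sub_distrib (supp1 m k _ _) (supp1 m k _ _), refl0 m k ((m : ℤ) + 1 - k)]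
  ring

lemma fdef (N : ℕ) (a : ℤ) :
    f N a = ∑ᶠ j : ℤ, sg j * T (Ee j) * (qb N (a - j) * qb N (a + j)) := by
  unfold f
  exact finsum_congr fun j => by simp only [sg, Ee]; ring

theorem stmt5 (n : ℕ) (hn : 1 ≤ n) (k : ℤ) :
    f n k = T k * f (n - 1) k + f (n - 1) (k - 1) := by
  obtain ⟨m, rfl⟩ : ∃ m, n = m + 1 := ⟨n - 1, by omega⟩
  have hsub : (m + 1 - 1 : ℕ) = m := rfl
  rw [hsub, fdef, fdef, fdef]
  have expand : ∀ j : ℤ,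
      sg j * T (Ee j) * (qb (m + 1) (k - j) * qb (m + 1) (k + j)) =
        sg j * T (Ee j + 2 * k) * (qb m (k - j) * qb m (k + j)) +
          sg j * T (Ee j - j + k) * (qb m (k - j) * qb m (k + j - 1)) +
          sg j * T (Ee j + j + k) * (qb m (k - j - 1) * qb m (k + j)) +
          sg j * T (Ee j) * (qb m (k - j - 1) * qb m (k + j - 1)) := by
    intro j
    rw [qb_succ, qb_succ]
    have g1 : (T (Ee j + 2 * k) : L) = T (Ee j) * (T (k - j) * T (k + j)) := by
      rw [← T_add (k - j) (k + j), ← T_add]; congr 1; ring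
    have g2 : (T (Ee j - j + k) : L) = T (Ee j) * T (k - j) := by
      rw [← T_add]; congr 1; ring
    have g3 : (T (Ee j + j + k) : L) = T (Ee j) * T (k + j) := by
      rw [← T_add]; congr 1; ring
    rw [g1, g2, g3]
    ring
  rw [finsum_congr expand]
  have sA := supp1 m k (fun j => sg j * T (Ee j + 2 * k)) (fun j => qb m (k + j))
  have sB := supp1 m k (fun j => sg j * T (Ee j - j + k)) (fun j => qb m (k + j - 1))
  have sC := supp2 m k (fun j => sg j * T (Ee j + j + k)) (fun j => qb m (k + j))
  have sD := supp2 m k (fun j => sg j * T (Ee j)) (fun j => qb m (k + j - 1))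
  rw [finsum_add_distrib (fsupp_add (fsupp_add sA sB) sC) sD,
    finsum_add_distrib (fsupp_add sA sB) sC,
    finsum_add_distrib sA sB,
    refl0 m k k, P3swap m k k]
  -- replace f m (k-1) summand args
  have hP4 : ∑ᶠ j : ℤ, sg j * T (Ee j) * (qb m (k - 1 - j) * qb m (k - 1 + j)) =
      ∑ᶠ j : ℤ, sg j * T (Ee j) * (qb m (k - j - 1) * qb m (k + j - 1)) :=
    finsum_congr fun j => by
      rw [show k - 1 - j = k - j - 1 from by ring, show k - 1 + j = k + j - 1 from by ring]
  rw [hP4]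
  have h2 : T k * ∑ᶠ j : ℤ, sg j * T (Ee j) * (qb m (k - j) * qb m (k + j)) =
      ∑ᶠ j : ℤ, sg j * T (Ee j + k) * (qb m (k - j) * qb m (k + j)) :=
    T_mul_finsum k Ee _ (supp1 m k _ _)
  have h3 : T k * ∑ᶠ j : ℤ, sg j * T (Ee j) * (qb m (k - j) * qb m (k + j - 1)) =
      ∑ᶠ j : ℤ, sg j * T (Ee j + k) * (qb m (k - j) * qb m (k + j - 1)) :=
    T_mul_finsum k Ee _ (supp1 m k _ _)
  have hA : ∑ᶠ j : ℤ, sg j * T (Ee j + 2 * k) * (qb m (k - j) * qb m (k + j)) =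
      T k * ∑ᶠ j : ℤ, sg j * T (Ee j + k) * (qb m (k - j) * qb m (k + j)) := by
    rw [T_mul_finsum k (fun j => Ee j + k) _ (supp1 m k _ _)]
    exact finsum_congr fun j => by rw [show Ee j + k + k = Ee j + 2 * k from by ring]
  have hcore : ∑ᶠ j : ℤ, sg j * T (Ee j + k) * (qb m (k - j) * qb m (k + j)) =
      (∑ᶠ j : ℤ, sg j * T (Ee j) * (qb m (k - j) * qb m (k + j))) -
        ∑ᶠ j : ℤ, sg j * T (Ee j) * (qb m (k - j) * qb m (k + j - 1)) :=
    (Yswap m k k).symm.trans (core m k)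
  linear_combination hA + T k * hcore - h3
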